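/- Let 0 ≤ α < 1, 0 ≤ x₁ < x₂ ≤ 1, let 𝓜 = 𝓜_{α,x₁,x₂} be the piecewise linear transformation of [0,1) with maximal invariant set 𝓢, and suppose 𝓢 ≠ ∅. Then for every ε with 0 < ε < 1: (i) 𝓢 ∩ [0,ε) ≠ ∅ or 𝓢 ∩ ⟨[x₂, x₂+ε)⟩ ≠ ∅; (ii) 𝓢 ∩ [1−ε,1) ≠ ∅ or 𝓢 ∩ ⟨[x₁−ε, x₁)⟩ ≠ ∅; (iii) 𝓢 ∩ [0,ε) ≠ ∅ or 𝓢 ∩ [1−ε,1) ≠ ∅; (iv) 𝓢 ∩ ⟨[x₁−ε, x₁)⟩ ≠ ∅ or 𝓢 ∩ ⟨[x₂, x₂+ε)⟩ ≠ ∅. Here ⟨I⟩ := {⟨t⟩ : t ∈ I} denotes the image of an interval I under the fractional-part map. -/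

import Mathlib

/-- The piecewise linear transformation `𝓜_{α,x₁,x₂}` of the circle `[0,1)`:
`t ↦ ⟨t + α + x₂ - x₁⟩` on `U = [0,x₁)`, identity on `H = [x₁,x₂)`,
and `t ↦ ⟨t + α⟩` on `V = [x₂,1)`. -/
noncomputable def Mmap (α x₁ x₂ : ℝ) (t : ℝ) : ℝ :=
  if t < x₁ then Int.fract (t + α + x₂ - x₁)
  else if t < x₂ then t
  else Int.fract (t + α)

/-- The maximal invariant set `𝓢` of `𝓜_{α,x₁,x₂}`: points of `[0,1)` whose orbit
never enters `H = [x₁,x₂)`. -/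
def Sset (α x₁ x₂ : ℝ) : Set ℝ :=
  {t | t ∈ Set.Ico (0 : ℝ) 1 ∧ ∀ n : ℕ, (Mmap α x₁ x₂)^[n] t ∉ Set.Ico x₁ x₂}

namespace MIS

lemma frac_add_frac (x c : ℝ) : Int.fract (Int.fract x + c) = Int.fract (x + c) := by
  have h : Int.fract x + c = (x + c) - (⌊x⌋ : ℤ) := by rw [Int.fract]; ring
  rw [h, Int.fract_sub_intCast]

lemma frac_sub_frac (x c : ℝ) : Int.fract (Int.fract x - c) = Int.fract (x - c) := by
  have h : Int.fract x - c = (x - c) - (⌊x⌋ : ℤ) := by rw [Int.fract]; ring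
  rw [h, Int.fract_sub_intCast]

lemma fract_self_of {x : ℝ} (h0 : 0 ≤ x) (h1 : x < 1) : Int.fract x = x :=
  Int.fract_eq_self.mpr ⟨h0, h1⟩

lemma fract_eq_of {x b : ℝ} (h0 : 0 ≤ b) (h1 : b < 1) (h : ∃ k : ℤ, x - b = k) :
    Int.fract x = b := by
  obtain ⟨k, hk⟩ := h
  rw [Int.fract_eq_iff]
  exact ⟨h0, h1, k, hk⟩

variable {α x₁ x₂ : ℝ}

lemma M_U {t : ℝ} (h : t < x₁) : Mmap α x₁ x₂ t = Int.fract (t + α + x₂ - x₁) := if_pos h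

lemma M_mid {t : ℝ} (h1 : ¬ t < x₁) (h2 : t < x₂) : Mmap α x₁ x₂ t = t := by
  unfold Mmap; rw [if_neg h1, if_pos h2]

lemma M_V (hx : x₁ < x₂) {t : ℝ} (h : x₂ ≤ t) : Mmap α x₁ x₂ t = Int.fract (t + α) := by
  unfold Mmap
  rw [if_neg (by linarith), if_neg (by linarith)]

lemma mem_S_iff {t : ℝ} :
    t ∈ Sset α x₁ x₂ ↔ (0 ≤ t ∧ t < 1) ∧
      ∀ n : ℕ, ¬ (x₁ ≤ (Mmap α x₁ x₂)^[n] t ∧ (Mmap α x₁ x₂)^[n] t < x₂) := by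
  unfold Sset
  simp [Set.mem_Ico]

lemma M_Ico (hx : x₁ < x₂) (hx2 : x₂ ≤ 1) {t : ℝ} (ht : 0 ≤ t ∧ t < 1) :
    0 ≤ Mmap α x₁ x₂ t ∧ Mmap α x₁ x₂ t < 1 := by
  by_cases h1 : t < x₁
  · rw [M_U h1]; exact ⟨Int.fract_nonneg _, Int.fract_lt_one _⟩
  · by_cases h2 : t < x₂
    · rw [M_mid h1 h2]; exact ht
    · rw [M_V hx (le_of_not_gt h2)]; exact ⟨Int.fract_nonneg _, Int.fract_lt_one _⟩

lemma iter_Ico (hx : x₁ < x₂) (hx2 : x₂ ≤ 1) {t : ℝ} (ht : 0 ≤ t ∧ t < 1) (n : ℕ) :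
    0 ≤ (Mmap α x₁ x₂)^[n] t ∧ (Mmap α x₁ x₂)^[n] t < 1 := by
  induction n with
  | zero => simpa using ht
  | succ n ih => rw [Function.iterate_succ_apply']; exact M_Ico hx hx2 ih

lemma S_Ico {s : ℝ} (hs : s ∈ Sset α x₁ x₂) : 0 ≤ s ∧ s < 1 := (mem_S_iff.mp hs).1

lemma S_notH {s : ℝ} (hs : s ∈ Sset α x₁ x₂) (n : ℕ) :
    ¬ (x₁ ≤ (Mmap α x₁ x₂)^[n] s ∧ (Mmap α x₁ x₂)^[n] s < x₂) := (mem_S_iff.mp hs).2 n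

lemma S_orbit (hx : x₁ < x₂) (hx2 : x₂ ≤ 1) {s : ℝ} (hs : s ∈ Sset α x₁ x₂) (n : ℕ) :
    (Mmap α x₁ x₂)^[n] s ∈ Sset α x₁ x₂ := by
  rw [mem_S_iff]
  refine ⟨iter_Ico hx hx2 (S_Ico hs) n, fun m => ?_⟩
  rw [← Function.iterate_add_apply]
  exact S_notH hs (m + n)

lemma orbit_cases (hx : x₁ < x₂) (hx2 : x₂ ≤ 1) {s : ℝ} (hs : s ∈ Sset α x₁ x₂) (n : ℕ) :
    (Mmap α x₁ x₂)^[n] s < x₁ ∨ (x₂ ≤ (Mmap α x₁ x₂)^[n] s) := by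
  rcases lt_or_ge ((Mmap α x₁ x₂)^[n] s) x₁ with h | h
  · exact Or.inl h
  · rcases lt_or_ge ((Mmap α x₁ x₂)^[n] s) x₂ with h2 | h2
    · exact absurd ⟨h, h2⟩ (S_notH hs n)
    · exact Or.inr h2

/-- splitting lemma: prefix avoids `H`, tail lands in `Sset`. -/
lemma mem_S_of_split (hx : x₁ < x₂) (hx2 : x₂ ≤ 1) {q : ℝ} (hq : 0 ≤ q ∧ q < 1) (N : ℕ)
    (hpre : ∀ m, m < N → ¬ (x₁ ≤ (Mmap α x₁ x₂)^[m] q ∧ (Mmap α x₁ x₂)^[m] q < x₂))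
    (htail : (Mmap α x₁ x₂)^[N] q ∈ Sset α x₁ x₂) : q ∈ Sset α x₁ x₂ := by
  rw [mem_S_iff]
  refine ⟨hq, fun n => ?_⟩
  rcases lt_or_ge n N with h | h
  · exact hpre n h
  · have : n = (n - N) + N := by omega
    rw [this, Function.iterate_add_apply]
    exact S_notH htail (n - N)

section Track

variable {s e : ℝ}

/-- right-tracking step condition -/
def okR (α x₁ x₂ s e : ℝ) (n : ℕ) : Prop :=
  ((Mmap α x₁ x₂)^[n] s < x₁ → (Mmap α x₁ x₂)^[n] s + e < x₁) ∧
  (x₂ ≤ (Mmap α x₁ x₂)^[n] s → (Mmap α x₁ x₂)^[n] s + e < 1)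

/-- left-tracking step condition -/
def okL (α x₁ x₂ s e : ℝ) (n : ℕ) : Prop :=
  ((Mmap α x₁ x₂)^[n] s < x₁ → e ≤ (Mmap α x₁ x₂)^[n] s) ∧
  (x₂ ≤ (Mmap α x₁ x₂)^[n] s → x₂ + e ≤ (Mmap α x₁ x₂)^[n] s)

lemma rtrack_formula (hx : x₁ < x₂) (hx2 : x₂ ≤ 1) (hs : s ∈ Sset α x₁ x₂) (he0 : 0 < e)
    (n : ℕ)
    (hlt : ∀ m, m ≤ n → (Mmap α x₁ x₂)^[m] s + e < 1)
    (hbr : ∀ m, m < n → ((Mmap α x₁ x₂)^[m] s < x₁ → (Mmap α x₁ x₂)^[m] s + e < x₁)) :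
    (Mmap α x₁ x₂)^[n] (s + e) = (Mmap α x₁ x₂)^[n] s + e := by
  induction n with
  | zero => simp
  | succ n ih =>
    have hf := ih (fun m hm => hlt m (hm.trans (Nat.le_succ n)))
      (fun m hm => hbr m (hm.trans (Nat.lt_succ_self n)))
    rw [Function.iterate_succ_apply', Function.iterate_succ_apply', hf]
    rcases orbit_cases hx hx2 hs n with hU | hV
    · have h1 : (Mmap α x₁ x₂)^[n] s + e < x₁ := hbr n (Nat.lt_succ_self n) hU
      rw [M_U h1, M_U hU]
      have e1 : Int.fract ((Mmap α x₁ x₂)^[n] s + e + α + x₂ - x₁)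
          = Int.fract (((Mmap α x₁ x₂)^[n] s + α + x₂ - x₁) + e) := by congr 1; ring
      rw [e1, ← frac_add_frac ((Mmap α x₁ x₂)^[n] s + α + x₂ - x₁) e]
      apply fract_self_of
      · have := Int.fract_nonneg ((Mmap α x₁ x₂)^[n] s + α + x₂ - x₁); linarith
      · have := hlt (n+1) le_rfl
        rw [Function.iterate_succ_apply', M_U hU] at this
        exact this
    · have hV' : x₂ ≤ (Mmap α x₁ x₂)^[n] s + e := by linarith
      rw [M_V hx hV', M_V hx hV]
      have e1 : Int.fract ((Mmap α x₁ x₂)^[n] s + e + α)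
          = Int.fract (((Mmap α x₁ x₂)^[n] s + α) + e) := by congr 1; ring
      rw [e1, ← frac_add_frac ((Mmap α x₁ x₂)^[n] s + α) e]
      apply fract_self_of
      · have := Int.fract_nonneg ((Mmap α x₁ x₂)^[n] s + α); linarith
      · have := hlt (n+1) le_rfl
        rw [Function.iterate_succ_apply', M_V hx hV] at this
        exact this

lemma okR_lt_one (hx : x₁ < x₂) (hx2 : x₂ ≤ 1) (hs : s ∈ Sset α x₁ x₂)
    (n : ℕ) (hok : okR α x₁ x₂ s e n) : (Mmap α x₁ x₂)^[n] s + e < 1 := by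
  rcases orbit_cases hx hx2 hs n with hU | hV
  · have := hok.1 hU; linarith
  · exact hok.2 hV

lemma rtrack_S (hx : x₁ < x₂) (hx2 : x₂ ≤ 1) (hs : s ∈ Sset α x₁ x₂) (he0 : 0 < e)
    (hok : ∀ n, okR α x₁ x₂ s e n) : s + e ∈ Sset α x₁ x₂ := by
  have hform : ∀ n, (Mmap α x₁ x₂)^[n] (s + e) = (Mmap α x₁ x₂)^[n] s + e := by
    intro n
    exact rtrack_formula hx hx2 hs he0 n (fun m _ => okR_lt_one hx hx2 hs m (hok m))
      (fun m _ => (hok m).1)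
  rw [mem_S_iff]
  constructor
  · constructor
    · have := (S_Ico hs).1; linarith
    · have := okR_lt_one hx hx2 hs 0 (hok 0); simpa using this
  · intro n hcon
    rw [hform n] at hcon
    rcases orbit_cases hx hx2 hs n with hU | hV
    · have := (hok n).1 hU; linarith [hcon.1]
    · linarith [hcon.2, he0]

lemma ltrack_formula (hx : x₁ < x₂) (hx0 : 0 ≤ x₁) (hx2 : x₂ ≤ 1) (hs : s ∈ Sset α x₁ x₂)
    (he0 : 0 < e) (n : ℕ)
    (hbr : ∀ m, m < n → okL α x₁ x₂ s e m) :
    (Mmap α x₁ x₂)^[n] (Int.fract (s - e)) = Int.fract ((Mmap α x₁ x₂)^[n] s - e) := by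
  induction n with
  | zero => simp
  | succ n ih =>
    have hf := ih (fun m hm => hbr m (hm.trans (Nat.lt_succ_self n)))
    rw [Function.iterate_succ_apply', Function.iterate_succ_apply', hf]
    have hok := hbr n (Nat.lt_succ_self n)
    have hI := iter_Ico (α := α) hx hx2 (S_Ico hs) n
    rcases orbit_cases hx hx2 hs n with hU | hV
    · have h1 : e ≤ (Mmap α x₁ x₂)^[n] s := hok.1 hU
      have hval : Int.fract ((Mmap α x₁ x₂)^[n] s - e) = (Mmap α x₁ x₂)^[n] s - e :=
        fract_self_of (by linarith) (by linarith [hI.2])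
      rw [hval, M_U (by linarith : (Mmap α x₁ x₂)^[n] s - e < x₁), M_U hU]
      have e1 : Int.fract ((Mmap α x₁ x₂)^[n] s - e + α + x₂ - x₁)
          = Int.fract (((Mmap α x₁ x₂)^[n] s + α + x₂ - x₁) - e) := by congr 1; ring
      rw [e1, ← frac_sub_frac ((Mmap α x₁ x₂)^[n] s + α + x₂ - x₁) e]
    · have h1 : x₂ + e ≤ (Mmap α x₁ x₂)^[n] s := hok.2 hV
      have hval : Int.fract ((Mmap α x₁ x₂)^[n] s - e) = (Mmap α x₁ x₂)^[n] s - e :=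
        fract_self_of (by linarith) (by linarith [hI.2])
      rw [hval, M_V hx (by linarith : x₂ ≤ (Mmap α x₁ x₂)^[n] s - e), M_V hx hV]
      have e1 : Int.fract ((Mmap α x₁ x₂)^[n] s - e + α)
          = Int.fract (((Mmap α x₁ x₂)^[n] s + α) - e) := by congr 1; ring
      rw [e1, ← frac_sub_frac ((Mmap α x₁ x₂)^[n] s + α) e]

lemma ltrack_S (hx : x₁ < x₂) (hx0 : 0 ≤ x₁) (hx2 : x₂ ≤ 1) (hs : s ∈ Sset α x₁ x₂)
    (he0 : 0 < e) (hok : ∀ n, okL α x₁ x₂ s e n) :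
    Int.fract (s - e) ∈ Sset α x₁ x₂ := by
  rw [mem_S_iff]
  refine ⟨⟨Int.fract_nonneg _, Int.fract_lt_one _⟩, fun n hcon => ?_⟩
  rw [ltrack_formula hx hx0 hx2 hs he0 n (fun m _ => hok m)] at hcon
  have hI := iter_Ico (α := α) hx hx2 (S_Ico hs) n
  rcases orbit_cases hx hx2 hs n with hU | hV
  · have h1 : e ≤ (Mmap α x₁ x₂)^[n] s := (hok n).1 hU
    rw [fract_self_of (by linarith) (by linarith [hI.2])] at hcon
    linarith [hcon.1]
  · have h1 : x₂ + e ≤ (Mmap α x₁ x₂)^[n] s := (hok n).2 hV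
    rw [fract_self_of (by linarith) (by linarith [hI.2])] at hcon
    linarith [hcon.2]

end Track

/-- part (i), general version -/
lemma parti (hx0 : 0 ≤ x₁) (hx : x₁ < x₂) (hx2 : x₂ ≤ 1)
    (hS : (Sset α x₁ x₂).Nonempty) {ε' : ℝ} (hε' : 0 < ε') :
    (Sset α x₁ x₂ ∩ Set.Ico 0 ε').Nonempty ∨
      (Sset α x₁ x₂ ∩ Int.fract '' Set.Ico x₂ (x₂ + ε')).Nonempty := by
  by_contra hcon
  push_neg at hcon
  obtain ⟨hA, hB⟩ := hcon
  have HA : ∀ z, z ∈ Sset α x₁ x₂ → 0 ≤ z → z < ε' → False := by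
    intro z h1 h2 h3
    exact Set.eq_empty_iff_forall_notMem.mp hA z ⟨h1, h2, h3⟩
  have HB : ∀ z, z ∈ Sset α x₁ x₂ → x₂ ≤ z → z < x₂ + ε' → z < 1 → False := by
    intro z h1 h2 h3 h4
    exact Set.eq_empty_iff_forall_notMem.mp hB z ⟨h1, ⟨z, ⟨h2, h3⟩, fract_self_of (by linarith) h4⟩⟩
  set δ := ε' / 2 with hδ
  have hδ0 : 0 < δ := by positivity
  have key : ∀ s, s ∈ Sset α x₁ x₂ → Int.fract (s - δ) ∈ Sset α x₁ x₂ := by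
    intro s hs
    apply ltrack_S hx hx0 hx2 hs hδ0
    intro n
    have hIn := iter_Ico (α := α) hx hx2 (S_Ico hs) n
    have hSn := S_orbit hx hx2 hs n
    constructor
    · intro hU
      by_contra h
      push_neg at h
      exact HA _ hSn hIn.1 (by linarith)
    · intro hV
      by_contra h
      push_neg at h
      exact HB _ hSn hV (by linarith) hIn.2
  obtain ⟨s₀, hs₀⟩ := hS
  have hs01 := S_Ico hs₀
  have step : ∀ k : ℕ, 0 ≤ s₀ - k * δ → s₀ - k * δ ∈ Sset α x₁ x₂ := by
    intro k
    induction k with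
    | zero => intro _; simpa using hs₀
    | succ k ih =>
      intro hpos
      have hc : ((k : ℝ) + 1) * δ = k * δ + δ := by ring
      push_cast at hpos ⊢
      rw [hc] at hpos ⊢
      have hk : 0 ≤ s₀ - k * δ := by linarith
      have hmem := key _ (ih hk)
      have harg : (s₀ - k * δ) - δ = s₀ - (k * δ + δ) := by ring
      rw [harg] at hmem
      have hkk : (0:ℝ) ≤ (k : ℝ) * δ := by positivity
      rwa [fract_self_of (by linarith) (by linarith [hs01.2])] at hmem
  set k := Nat.floor (s₀ / δ) with hk
  have h1 : (k : ℝ) * δ ≤ s₀ := by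
    have h := Nat.floor_le (div_nonneg hs01.1 hδ0.le)
    calc (k : ℝ) * δ ≤ (s₀ / δ) * δ := by
          exact mul_le_mul_of_nonneg_right h hδ0.le
      _ = s₀ := by field_simp
  have h2 : s₀ - k * δ < δ := by
    have h := Nat.lt_floor_add_one (s₀ / δ)
    have : s₀ < ((k : ℝ) + 1) * δ := by
      calc s₀ = (s₀ / δ) * δ := by field_simp
        _ < ((k : ℝ) + 1) * δ := by
            exact mul_lt_mul_of_pos_right h hδ0
    nlinarith
  exact HA _ (step k (by linarith)) (by linarith) (by linarith)

/-- part (ii), general version -/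
lemma partii (hx0 : 0 ≤ x₁) (hx : x₁ < x₂) (hx2 : x₂ ≤ 1)
    (hS : (Sset α x₁ x₂).Nonempty) {ε' : ℝ} (hε' : 0 < ε') :
    (Sset α x₁ x₂ ∩ Set.Ico (1 - ε') 1).Nonempty ∨
      (Sset α x₁ x₂ ∩ Int.fract '' Set.Ico (x₁ - ε') x₁).Nonempty := by
  by_contra hcon
  push_neg at hcon
  obtain ⟨hA, hB⟩ := hcon
  have HA : ∀ z, z ∈ Sset α x₁ x₂ → 1 - ε' ≤ z → z < 1 → False := by
    intro z h1 h2 h3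
    exact Set.eq_empty_iff_forall_notMem.mp hA z ⟨h1, h2, h3⟩
  have HB : ∀ z, z ∈ Sset α x₁ x₂ → x₁ - ε' ≤ z → z < x₁ → 0 ≤ z → False := by
    intro z h1 h2 h3 h4
    exact Set.eq_empty_iff_forall_notMem.mp hB z ⟨h1, ⟨z, ⟨h2, h3⟩, fract_self_of h4 (by linarith)⟩⟩
  set δ := ε' / 2 with hδ
  have hδ0 : 0 < δ := by positivity
  have key : ∀ s, s ∈ Sset α x₁ x₂ → s + δ ∈ Sset α x₁ x₂ := by
    intro s hs
    apply rtrack_S hx hx2 hs hδ0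
    intro n
    have hIn := iter_Ico (α := α) hx hx2 (S_Ico hs) n
    have hSn := S_orbit hx hx2 hs n
    constructor
    · intro hU
      by_contra h
      push_neg at h
      exact HB _ hSn (by linarith) hU hIn.1
    · intro hV
      by_contra h
      push_neg at h
      exact HA _ hSn (by linarith) hIn.2
  obtain ⟨s₀, hs₀⟩ := hS
  have hs01 := S_Ico hs₀
  have step : ∀ k : ℕ, s₀ + k * δ ∈ Sset α x₁ x₂ := by
    intro k
    induction k with
    | zero => simpa using hs₀
    | succ k ih =>
      have := key _ ih
      have hc : s₀ + (k : ℝ) * δ + δ = s₀ + ((k : ℝ) + 1) * δ := by ring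
      rw [hc] at this
      push_cast
      exact this
  obtain ⟨k, hk⟩ := exists_nat_gt ((1 - s₀) / δ)
  have : s₀ + k * δ < 1 := (S_Ico (step k)).2
  have : (1 - s₀) / δ * δ < (k : ℝ) * δ := mul_lt_mul_of_pos_right hk hδ0
  have h3 : (1 - s₀) / δ * δ = 1 - s₀ := by field_simp
  linarith

lemma least_not {P : ℕ → Prop} (h : ¬ ∀ n, P n) : ∃ N, (∀ m, m < N → P m) ∧ ¬ P N := by
  push_neg at h
  classical
  refine ⟨Nat.find h, fun m hm => ?_, Nat.find_spec h⟩
  exact not_not.mp (Nat.find_min h hm)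

lemma ite_fract_int (X : ℝ) :
    ∃ k : ℤ, X - (if Int.fract X = 0 then (1:ℝ) else Int.fract X) = k := by
  by_cases h : Int.fract X = 0
  · refine ⟨⌊X⌋ - 1, ?_⟩
    have : X - ⌊X⌋ = 0 := h
    rw [if_pos h]
    push_cast
    linarith
  · refine ⟨⌊X⌋, ?_⟩
    rw [if_neg h, Int.fract]
    ring

lemma ite_fract_bounds (X : ℝ) :
    0 < (if Int.fract X = 0 then (1:ℝ) else Int.fract X) ∧
      (if Int.fract X = 0 then (1:ℝ) else Int.fract X) ≤ 1 := by
  by_cases h : Int.fract X = 0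
  · rw [if_pos h]; norm_num
  · rw [if_neg h]
    have h1 := Int.fract_nonneg X
    have h2 := Int.fract_lt_one X
    exact ⟨lt_of_le_of_ne h1 (Ne.symm h), h2.le⟩

/-- the left-limit map -/
noncomputable def Mleft (α x₁ x₂ : ℝ) (p : ℝ) : ℝ :=
  if p ≤ x₁ then
    (if Int.fract (p + α + x₂ - x₁) = 0 then (1:ℝ) else Int.fract (p + α + x₂ - x₁))
  else
    (if Int.fract (p + α) = 0 then (1:ℝ) else Int.fract (p + α))

/-- right accessibility -/
def Racc (α x₁ x₂ p : ℝ) : Prop :=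
  ∀ θ : ℝ, 0 < θ → ∃ z, z ∈ Sset α x₁ x₂ ∧ p ≤ z ∧ z < p + θ

/-- left accessibility -/
def Lacc (α x₁ x₂ p : ℝ) : Prop :=
  ∀ θ : ℝ, 0 < θ → ∃ z, z ∈ Sset α x₁ x₂ ∧ p - θ ≤ z ∧ z < p

lemma racc_step (hx : x₁ < x₂) (hx2 : x₂ ≤ 1) {p : ℝ}
    (hp : Racc α x₁ x₂ p) (hpI : 0 ≤ p ∧ p < 1) :
    ¬ (x₁ ≤ p ∧ p < x₂) ∧ Racc α x₁ x₂ (Mmap α x₁ x₂ p) := by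
  have hnot : ¬ (x₁ ≤ p ∧ p < x₂) := by
    rintro ⟨h1, h2⟩
    obtain ⟨z, hz, hz1, hz2⟩ := hp (x₂ - p) (by linarith)
    exact S_notH hz 0 (by simpa using ⟨by linarith, by linarith⟩)
  refine ⟨hnot, ?_⟩
  intro θ hθ
  have hMI := M_Ico hx hx2 (α := α) hpI
  by_cases hU : p < x₁
  · set θ' := min θ (min (x₁ - p) (1 - Mmap α x₁ x₂ p)) with hθ'
    have hθ'0 : 0 < θ' := by
      apply lt_min hθ
      apply lt_min (by linarith) (by linarith [hMI.2])
    obtain ⟨z, hz, hz1, hz2⟩ := hp θ' hθ'0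
    have hzθ : z - p < θ' := by linarith
    have hzx : z < x₁ := by
      have : θ' ≤ x₁ - p := le_trans (min_le_right _ _) (min_le_left _ _)
      linarith
    have hM1 : θ' ≤ 1 - Mmap α x₁ x₂ p := le_trans (min_le_right _ _) (min_le_right _ _)
    have hval : Mmap α x₁ x₂ z = Mmap α x₁ x₂ p + (z - p) := by
      rw [M_U hzx, M_U hU]
      have e1 : Int.fract (z + α + x₂ - x₁) = Int.fract ((p + α + x₂ - x₁) + (z - p)) := by
        congr 1; ring
      rw [e1, ← frac_add_frac (p + α + x₂ - x₁) (z - p), ← M_U hU]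
      exact fract_self_of (by linarith [hMI.1]) (by linarith)
    refine ⟨Mmap α x₁ x₂ z, ?_, by linarith [hval.ge], ?_⟩
    · have := S_orbit hx hx2 hz 1
      simpa using this
    · rw [hval]
      have : θ' ≤ θ := min_le_left _ _
      linarith
  · have hV : x₂ ≤ p := by
      rcases lt_or_ge p x₂ with h | h
      · exact absurd ⟨le_of_not_gt hU, h⟩ hnot
      · exact h
    set θ' := min θ (min (1 - p) (1 - Mmap α x₁ x₂ p)) with hθ'
    have hθ'0 : 0 < θ' := by
      apply lt_min hθ
      apply lt_min (by linarith [hpI.2]) (by linarith [hMI.2])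
    obtain ⟨z, hz, hz1, hz2⟩ := hp θ' hθ'0
    have hzθ : z - p < θ' := by linarith
    have hzx : x₂ ≤ z := by linarith
    have hM1 : θ' ≤ 1 - Mmap α x₁ x₂ p := le_trans (min_le_right _ _) (min_le_right _ _)
    have hval : Mmap α x₁ x₂ z = Mmap α x₁ x₂ p + (z - p) := by
      rw [M_V hx hzx, M_V hx hV]
      have e1 : Int.fract (z + α) = Int.fract ((p + α) + (z - p)) := by
        congr 1; ring
      rw [e1, ← frac_add_frac (p + α) (z - p), ← M_V hx hV]
      exact fract_self_of (by linarith [hMI.1]) (by linarith)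
    refine ⟨Mmap α x₁ x₂ z, ?_, by linarith [hval.ge], ?_⟩
    · have := S_orbit hx hx2 hz 1
      simpa using this
    · rw [hval]
      have : θ' ≤ θ := min_le_left _ _
      linarith

lemma zero_S (hx : x₁ < x₂) (hx2 : x₂ ≤ 1) (h0 : Racc α x₁ x₂ 0) : (0:ℝ) ∈ Sset α x₁ x₂ := by
  have aux : ∀ n : ℕ, Racc α x₁ x₂ ((Mmap α x₁ x₂)^[n] 0) ∧
      (0 ≤ (Mmap α x₁ x₂)^[n] 0 ∧ (Mmap α x₁ x₂)^[n] 0 < 1) := by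
    intro n
    induction n with
    | zero => exact ⟨by simpa using h0, by norm_num⟩
    | succ n ih =>
      rw [Function.iterate_succ_apply']
      exact ⟨(racc_step hx hx2 ih.1 ih.2).2, M_Ico hx hx2 ih.2⟩
  rw [mem_S_iff]
  refine ⟨by norm_num, fun n => ?_⟩
  exact (racc_step hx hx2 (aux n).1 (aux n).2).1

lemma fract_shift_int {X v c : ℝ} (h : ∃ k : ℤ, X - v = k) :
    Int.fract (X - c) = Int.fract (v - c) := by
  obtain ⟨k, hk⟩ := h
  have : X - c = (v - c) + k := by linarith
  rw [this, Int.fract_add_intCast]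

lemma Mleft_U {p : ℝ} (h : p ≤ x₁) :
    Mleft α x₁ x₂ p =
      (if Int.fract (p + α + x₂ - x₁) = 0 then (1:ℝ) else Int.fract (p + α + x₂ - x₁)) :=
  if_pos h

lemma Mleft_V {p : ℝ} (h : ¬ p ≤ x₁) :
    Mleft α x₁ x₂ p = (if Int.fract (p + α) = 0 then (1:ℝ) else Int.fract (p + α)) :=
  if_neg h

lemma Mleft_bounds (p : ℝ) : 0 < Mleft α x₁ x₂ p ∧ Mleft α x₁ x₂ p ≤ 1 := by
  by_cases h : p ≤ x₁
  · rw [Mleft_U h]; exact ite_fract_bounds _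
  · rw [Mleft_V h]; exact ite_fract_bounds _

lemma Mleft_int_U {p : ℝ} (h : p ≤ x₁) :
    ∃ k : ℤ, (p + α + x₂ - x₁) - Mleft α x₁ x₂ p = k := by
  rw [Mleft_U h]; exact ite_fract_int _

lemma Mleft_int_V {p : ℝ} (h : ¬ p ≤ x₁) :
    ∃ k : ℤ, (p + α) - Mleft α x₁ x₂ p = k := by
  rw [Mleft_V h]; exact ite_fract_int _

lemma lacc_step (hx : x₁ < x₂) (hx0 : 0 ≤ x₁) (hx2 : x₂ ≤ 1) {p : ℝ}
    (hp : Lacc α x₁ x₂ p) (h0 : 0 < p) (h1 : p ≤ 1) :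
    ¬ (x₁ < p ∧ p ≤ x₂) ∧ Lacc α x₁ x₂ (Mleft α x₁ x₂ p) := by
  have hnot : ¬ (x₁ < p ∧ p ≤ x₂) := by
    rintro ⟨ha, hb⟩
    obtain ⟨z, hz, hz1, hz2⟩ := hp (p - x₁) (by linarith)
    exact S_notH hz 0 (by simpa using ⟨by linarith, by linarith⟩)
  refine ⟨hnot, ?_⟩
  intro θ hθ
  have hv := Mleft_bounds (α := α) (x₁ := x₁) (x₂ := x₂) p
  by_cases hU : p ≤ x₁
  · set θ' := min θ (min p (Mleft α x₁ x₂ p)) with hθ'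
    have hθ'0 : 0 < θ' := lt_min hθ (lt_min h0 hv.1)
    obtain ⟨z, hz, hz1, hz2⟩ := hp θ' hθ'0
    have hd1 : p - z ≤ θ' := by linarith
    have hθp : θ' ≤ p := le_trans (min_le_right _ _) (min_le_left _ _)
    have hθv : θ' ≤ Mleft α x₁ x₂ p := le_trans (min_le_right _ _) (min_le_right _ _)
    have hval : Mmap α x₁ x₂ z = Mleft α x₁ x₂ p - (p - z) := by
      rw [M_U (by linarith : z < x₁)]
      have e1 : Int.fract (z + α + x₂ - x₁) = Int.fract ((p + α + x₂ - x₁) - (p - z)) := by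
        congr 1; ring
      rw [e1, fract_shift_int (Mleft_int_U hU)]
      exact fract_self_of (by linarith) (by linarith [hv.2])
    refine ⟨Mmap α x₁ x₂ z, ?_, ?_, ?_⟩
    · have := S_orbit hx hx2 hz 1; simpa using this
    · rw [hval]; have : θ' ≤ θ := min_le_left _ _; linarith
    · rw [hval]; linarith
  · have hpx : x₂ < p := by
      rcases le_or_gt p x₂ with h | h
      · exact absurd ⟨lt_of_not_ge hU, h⟩ hnot
      · exact h
    set θ' := min θ (min (p - x₂) (Mleft α x₁ x₂ p)) with hθ'
    have hθ'0 : 0 < θ' := lt_min hθ (lt_min (by linarith) hv.1)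
    obtain ⟨z, hz, hz1, hz2⟩ := hp θ' hθ'0
    have hd1 : p - z ≤ θ' := by linarith
    have hθp : θ' ≤ p - x₂ := le_trans (min_le_right _ _) (min_le_left _ _)
    have hθv : θ' ≤ Mleft α x₁ x₂ p := le_trans (min_le_right _ _) (min_le_right _ _)
    have hval : Mmap α x₁ x₂ z = Mleft α x₁ x₂ p - (p - z) := by
      rw [M_V hx (by linarith : x₂ ≤ z)]
      have e1 : Int.fract (z + α) = Int.fract ((p + α) - (p - z)) := by
        congr 1; ring
      rw [e1, fract_shift_int (Mleft_int_V hU)]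
      exact fract_self_of (by linarith) (by linarith [hv.2])
    refine ⟨Mmap α x₁ x₂ z, ?_, ?_, ?_⟩
    · have := S_orbit hx hx2 hz 1; simpa using this
    · rw [hval]; have : θ' ≤ θ := min_le_left _ _; linarith
    · rw [hval]; linarith

lemma lacc_one (hx0 : 0 ≤ x₁) (hx : x₁ < x₂) (hx2 : x₂ ≤ 1)
    (hS : (Sset α x₁ x₂).Nonempty) {ε : ℝ} (hε0 : 0 < ε)
    (hA : Sset α x₁ x₂ ∩ Int.fract '' Set.Ico (x₁ - ε) x₁ = ∅) :
    Lacc α x₁ x₂ 1 := by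
  intro θ hθ
  have hθ'' : (0:ℝ) < min θ ε := lt_min hθ hε0
  rcases partii hx0 hx hx2 hS hθ'' with ⟨z, hz, hz1, hz2⟩ | ⟨z, hz, hzim⟩
  · refine ⟨z, hz, ?_, hz2⟩
    have : min θ ε ≤ θ := min_le_left _ _
    linarith
  · exfalso
    have hsub : Int.fract '' Set.Ico (x₁ - min θ ε) x₁ ⊆ Int.fract '' Set.Ico (x₁ - ε) x₁ :=
      Set.image_mono (Set.Ico_subset_Ico (by linarith [min_le_right θ ε]) le_rfl)
    exact Set.eq_empty_iff_forall_notMem.mp hA z ⟨hz, hsub hzim⟩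

lemma tubeL (hx0 : 0 ≤ x₁) (hx : x₁ < x₂) (hx2 : x₂ ≤ 1) (hx21 : x₂ < 1)
    (hS : (Sset α x₁ x₂).Nonempty) {ε : ℝ} (hε0 : 0 < ε)
    (hA : Sset α x₁ x₂ ∩ Int.fract '' Set.Ico (x₁ - ε) x₁ = ∅)
    (hB : Sset α x₁ x₂ ∩ Int.fract '' Set.Ico x₂ (x₂ + ε) = ∅)
    (h0S : (0:ℝ) ∈ Sset α x₁ x₂)
    {d : ℝ} (hd0 : 0 < d) (hd1 : d < 1) (hdε : d ≤ ε) :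
    1 - d ∈ Sset α x₁ x₂ := by
  have HR' : ∀ z, z ∈ Sset α x₁ x₂ → x₂ ≤ z → z < x₂ + ε → False := by
    intro z hz h1 h2
    exact Set.eq_empty_iff_forall_notMem.mp hB z
      ⟨hz, ⟨z, ⟨h1, h2⟩, fract_self_of (S_Ico hz).1 (S_Ico hz).2⟩⟩
  set L : ℕ → ℝ := fun n => (Mleft α x₁ x₂)^[n] 1 with hLdef
  have hL0 : L 0 = 1 := rfl
  have hLsucc : ∀ n, L (n+1) = Mleft α x₁ x₂ (L n) := by
    intro n; simp [hLdef, Function.iterate_succ_apply']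
  have LP : ∀ n, Lacc α x₁ x₂ (L n) ∧ 0 < L n ∧ L n ≤ 1 := by
    intro n
    induction n with
    | zero =>
      rw [hL0]
      exact ⟨lacc_one hx0 hx hx2 hS hε0 hA, by norm_num⟩
    | succ n ih =>
      rw [hLsucc n]
      exact ⟨(lacc_step hx hx0 hx2 ih.1 ih.2.1 ih.2.2).2, Mleft_bounds _⟩
  have Lmid : ∀ n, ¬ (x₁ < L n ∧ L n ≤ x₂) := by
    intro n
    exact (lacc_step hx hx0 hx2 (LP n).1 (LP n).2.1 (LP n).2.2).1
  have Lexcl : ∀ n, ∀ c : ℝ, 0 < c → c ≤ ε → ¬ L n ≤ x₁ → x₂ ≤ L n - c := by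
    intro n c hc0 hcε hnle
    by_contra hcon
    push_neg at hcon
    have hx1L : x₁ < L n := lt_of_not_ge hnle
    have hx2L : x₂ < L n := lt_of_not_ge (fun hle => (Lmid n) ⟨hx1L, hle⟩)
    obtain ⟨z, hz, hz1, hz2⟩ := (LP n).1 (L n - x₂) (by linarith)
    exact HR' z hz (by linarith) (by linarith)
  have Inv : ∀ m : ℕ, (∃ n : ℕ, ∃ d' : ℝ, 0 < d' ∧ d' ≤ d ∧ d' < L n ∧
      (Mmap α x₁ x₂)^[m] (1 - d) = L n - d') ∨
      (∃ n : ℕ, (Mmap α x₁ x₂)^[m] (1 - d) = (Mmap α x₁ x₂)^[n] 0) := by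
    intro m
    induction m with
    | zero =>
      left
      exact ⟨0, d, hd0, le_rfl, by rw [hL0]; exact hd1, by simp [hL0]⟩
    | succ m ih =>
      rcases ih with ⟨n, d', hd'0, hd'd, hd'L, hm⟩ | ⟨n, hm⟩
      · rw [Function.iterate_succ_apply', hm]
        have hLP := LP n
        by_cases hU : L n ≤ x₁
        · have hqx : L n - d' < x₁ := by linarith
          have hval : Mmap α x₁ x₂ (L n - d') = Int.fract (L (n+1) - d') := by
            rw [M_U hqx]
            have e1 : Int.fract (L n - d' + α + x₂ - x₁)
                = Int.fract ((L n + α + x₂ - x₁) - d') := by congr 1; ring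
            rw [e1, fract_shift_int (Mleft_int_U hU), hLsucc n]
          rw [hval]
          rcases lt_trichotomy d' (L (n+1)) with hlt | heq | hgt
          · left
            refine ⟨n+1, d', hd'0, hd'd, hlt, ?_⟩
            have hb := LP (n+1)
            exact fract_self_of (by linarith) (by linarith [hb.2.2])
          · right
            refine ⟨0, ?_⟩
            rw [← heq]
            simp
          · left
            have hLp := (LP (n+1)).2.1
            refine ⟨0, d' - L (n+1), by linarith, by linarith, ?_, ?_⟩
            · rw [hL0]; linarith [(LP (n+1)).2.1]
            · rw [hL0]
              refine fract_eq_of ?_ ?_ ⟨-1, ?_⟩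
              · linarith [(LP (n+1)).2.1]
              · linarith
              · push_cast; ring
        · have hqx : x₂ ≤ L n - d' := Lexcl n d' hd'0 (le_trans hd'd hdε) hU
          have hval : Mmap α x₁ x₂ (L n - d') = Int.fract (L (n+1) - d') := by
            rw [M_V hx hqx]
            have e1 : Int.fract (L n - d' + α) = Int.fract ((L n + α) - d') := by
              congr 1; ring
            rw [e1, fract_shift_int (Mleft_int_V hU), hLsucc n]
          rw [hval]
          rcases lt_trichotomy d' (L (n+1)) with hlt | heq | hgt
          · left
            refine ⟨n+1, d', hd'0, hd'd, hlt, ?_⟩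
            have hb := LP (n+1)
            exact fract_self_of (by linarith) (by linarith [hb.2.2])
          · right
            refine ⟨0, ?_⟩
            rw [← heq]
            simp
          · left
            have hLp := (LP (n+1)).2.1
            refine ⟨0, d' - L (n+1), by linarith, by linarith, ?_, ?_⟩
            · rw [hL0]; linarith [(LP (n+1)).2.1]
            · rw [hL0]
              refine fract_eq_of ?_ ?_ ⟨-1, ?_⟩
              · linarith [(LP (n+1)).2.1]
              · linarith
              · push_cast; ring
      · right
        refine ⟨n+1, ?_⟩
        rw [Function.iterate_succ_apply', hm]
        exact (Function.iterate_succ_apply' (Mmap α x₁ x₂) n 0).symm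
  rw [mem_S_iff]
  refine ⟨⟨by linarith, by linarith⟩, fun m => ?_⟩
  rcases Inv m with ⟨n, d', hd'0, hd'd, hd'L, hm⟩ | ⟨n, hm⟩
  · rw [hm]
    by_cases hU : L n ≤ x₁
    · rintro ⟨hc1, hc2⟩
      linarith
    · have := Lexcl n d' hd'0 (le_trans hd'd hdε) hU
      rintro ⟨hc1, hc2⟩
      linarith
  · rw [hm]
    exact S_notH h0S n

lemma partiv (hx0 : 0 ≤ x₁) (hx : x₁ < x₂) (hx2 : x₂ ≤ 1)
    (hS : (Sset α x₁ x₂).Nonempty) {ε : ℝ} (hε0 : 0 < ε) (hε1 : ε < 1) :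
    (Sset α x₁ x₂ ∩ Int.fract '' Set.Ico (x₁ - ε) x₁).Nonempty ∨
      (Sset α x₁ x₂ ∩ Int.fract '' Set.Ico x₂ (x₂ + ε)).Nonempty := by
  by_contra hcon
  push_neg at hcon
  obtain ⟨hA, hB⟩ := hcon
  have HL' : ∀ z, z ∈ Sset α x₁ x₂ → x₁ - ε ≤ z → z < x₁ → False := by
    intro z hz h1 h2
    exact Set.eq_empty_iff_forall_notMem.mp hA z
      ⟨hz, ⟨z, ⟨h1, h2⟩, fract_self_of (S_Ico hz).1 (S_Ico hz).2⟩⟩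
  have HR' : ∀ z, z ∈ Sset α x₁ x₂ → x₂ ≤ z → z < x₂ + ε → False := by
    intro z hz h1 h2
    exact Set.eq_empty_iff_forall_notMem.mp hB z
      ⟨hz, ⟨z, ⟨h1, h2⟩, fract_self_of (S_Ico hz).1 (S_Ico hz).2⟩⟩
  by_cases hx1 : 0 < x₁
  case neg =>
    have hx10 : x₁ = 0 := le_antisymm (le_of_not_gt hx1) hx0
    rcases partii hx0 hx hx2 hS hε0 with ⟨z, hz, hz1, hz2⟩ | ⟨z, hz, hzim⟩
    · refine Set.eq_empty_iff_forall_notMem.mp hA z ⟨hz, ⟨z - 1, ⟨?_, ?_⟩, ?_⟩⟩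
      · rw [hx10]; linarith
      · rw [hx10]; linarith
      · have h1 : Int.fract (z - 1) = Int.fract z := by
          have := Int.fract_sub_intCast z 1
          simpa using this
        rw [h1]
        exact fract_self_of (S_Ico hz).1 (S_Ico hz).2
    · exact Set.eq_empty_iff_forall_notMem.mp hA z ⟨hz, hzim⟩
  case pos =>
  by_cases hx21 : x₂ < 1
  case neg =>
    have hx2e : x₂ = 1 := le_antisymm hx2 (le_of_not_gt hx21)
    rcases parti hx0 hx hx2 hS hε0 with ⟨z, hz, hz1, hz2⟩ | ⟨z, hz, hzim⟩
    · refine Set.eq_empty_iff_forall_notMem.mp hB z ⟨hz, ⟨z + 1, ⟨?_, ?_⟩, ?_⟩⟩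
      · rw [hx2e]; linarith
      · rw [hx2e]; linarith
      · have h1 : Int.fract (z + 1) = Int.fract z := by
          have := Int.fract_add_intCast z 1
          simpa using this
        rw [h1]
        exact fract_self_of (S_Ico hz).1 (S_Ico hz).2
    · exact Set.eq_empty_iff_forall_notMem.mp hB z ⟨hz, hzim⟩
  case pos =>
  -- main case
  set δ := min (min ε (x₂ - x₁)) (min x₁ (1 - x₂)) / 2 with hδdef
  have hδ0 : 0 < δ := by
    apply div_pos _ (by norm_num)
    exact lt_min (lt_min hε0 (by linarith)) (lt_min hx1 (by linarith))
  have hmε : min (min ε (x₂ - x₁)) (min x₁ (1 - x₂)) ≤ ε :=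
    le_trans (min_le_left _ _) (min_le_left _ _)
  have hmx2 : min (min ε (x₂ - x₁)) (min x₁ (1 - x₂)) ≤ 1 - x₂ :=
    le_trans (min_le_right _ _) (min_le_right _ _)
  have hδε : δ < ε := by rw [hδdef]; linarith
  have hδx2 : δ < 1 - x₂ := by rw [hδdef]; linarith
  have hδ1 : δ < 1 := by linarith
  -- Racc 0
  have racc0 : Racc α x₁ x₂ 0 := by
    intro θ hθ
    have hθ'' : (0:ℝ) < min θ ε := lt_min hθ hε0
    rcases parti hx0 hx hx2 hS hθ'' with ⟨z, hz, hz1, hz2⟩ | ⟨z, hz, hzim⟩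
    · exact ⟨z, hz, hz1, by linarith [min_le_left θ ε]⟩
    · exfalso
      have hsub : Int.fract '' Set.Ico x₂ (x₂ + min θ ε) ⊆ Int.fract '' Set.Ico x₂ (x₂ + ε) :=
        Set.image_mono (Set.Ico_subset_Ico le_rfl (by linarith [min_le_right θ ε]))
      exact Set.eq_empty_iff_forall_notMem.mp hB z ⟨hz, hsub hzim⟩
  have h0S : (0:ℝ) ∈ Sset α x₁ x₂ := zero_S hx hx2 racc0
  -- the sweep
  have key : ∀ s, s ∈ Sset α x₁ x₂ → Int.fract (s - δ) ∈ Sset α x₁ x₂ := by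
    intro s hs
    by_cases hall : ∀ n, okL α x₁ x₂ s δ n
    · exact ltrack_S hx hx0 hx2 hs hδ0 hall
    · obtain ⟨N, hpre, hNf⟩ := least_not hall
      rw [okL, not_and_or] at hNf
      have hIN := iter_Ico (α := α) hx hx2 (S_Ico hs) N
      rcases hNf with hf | hf
      · push_neg at hf
        obtain ⟨hfU, hfδ⟩ := hf
        -- seam stop: land in the left seam tube
        have hval : (Mmap α x₁ x₂)^[N] (Int.fract (s - δ))
            = Int.fract ((Mmap α x₁ x₂)^[N] s - δ) :=
          ltrack_formula hx hx0 hx2 hs hδ0 N hpre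
        have hfr : Int.fract ((Mmap α x₁ x₂)^[N] s - δ)
            = 1 - (δ - (Mmap α x₁ x₂)^[N] s) := by
          refine fract_eq_of (by linarith [hIN.1]) (by linarith) ⟨-1, ?_⟩
          push_cast; ring
        have htail : (Mmap α x₁ x₂)^[N] (Int.fract (s - δ)) ∈ Sset α x₁ x₂ := by
          rw [hval, hfr]
          exact tubeL hx0 hx hx2 hx21 hS hε0 hA hB h0S (by linarith)
            (by linarith [hIN.1]) (by linarith [hIN.1])
        refine mem_S_of_split hx hx2 ⟨Int.fract_nonneg _, Int.fract_lt_one _⟩ N ?_ htail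
        intro m hm
        rw [ltrack_formula hx hx0 hx2 hs hδ0 m (fun j hj => hpre j (hj.trans hm))]
        have hokm := hpre m hm
        have hIm := iter_Ico (α := α) hx hx2 (S_Ico hs) m
        rcases orbit_cases hx hx2 hs m with hU | hV
        · have h1 : δ ≤ (Mmap α x₁ x₂)^[m] s := hokm.1 hU
          rw [fract_self_of (by linarith) (by linarith [hIm.2])]
          rintro ⟨hc1, hc2⟩
          linarith
        · have h1 : x₂ + δ ≤ (Mmap α x₁ x₂)^[m] s := hokm.2 hV
          rw [fract_self_of (by linarith) (by linarith [hIm.2])]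
          rintro ⟨hc1, hc2⟩
          linarith
      · push_neg at hf
        obtain ⟨hfV, hfδ⟩ := hf
        exact absurd (HR' _ (S_orbit hx hx2 hs N) hfV (by linarith)) not_false
  obtain ⟨s₀, hs₀⟩ := hS
  have hs01 := S_Ico hs₀
  have vals : ∀ k : ℕ, Int.fract (s₀ - k * δ) ∈ Sset α x₁ x₂ := by
    intro k
    induction k with
    | zero =>
      push_cast
      have : s₀ - 0 * δ = s₀ := by ring
      rw [this, fract_self_of hs01.1 hs01.2]
      exact hs₀
    | succ k ih =>
      have := key _ ih
      rw [frac_sub_frac (s₀ - k * δ) δ] at this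
      have harg : s₀ - (k:ℝ) * δ - δ = s₀ - ((k:ℝ) + 1) * δ := by ring
      rw [harg] at this
      push_cast
      exact this
  set w := Int.fract (s₀ - x₂) with hwdef
  have hw0 : 0 ≤ w := Int.fract_nonneg _
  have hw1 : w < 1 := Int.fract_lt_one _
  set k := Nat.floor (w / δ) with hkdef
  have hk1 : (k : ℝ) * δ ≤ w := by
    have h := Nat.floor_le (div_nonneg hw0 hδ0.le)
    calc (k : ℝ) * δ ≤ (w / δ) * δ := mul_le_mul_of_nonneg_right h hδ0.le
      _ = w := by field_simp
  have hk2 : w - (k:ℝ) * δ < δ := by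
    have h := Nat.lt_floor_add_one (w / δ)
    have : w < ((k : ℝ) + 1) * δ := by
      calc w = (w / δ) * δ := by field_simp
        _ < ((k : ℝ) + 1) * δ := mul_lt_mul_of_pos_right h hδ0
    nlinarith
  have hval : Int.fract (s₀ - k * δ) = x₂ + (w - k * δ) := by
    refine fract_eq_of (by linarith) (by linarith) ⟨⌊s₀ - x₂⌋, ?_⟩
    have hw' : w = (s₀ - x₂) - ⌊s₀ - x₂⌋ := by rw [hwdef, Int.fract]
    rw [hw']
    ring
  refine HR' (x₂ + (w - k * δ)) ?_ (by linarith) (by linarith)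
  rw [← hval]
  exact vals k

section PartIII

variable {ε : ℝ}

lemma tpair (hx0 : 0 ≤ x₁) (hx : x₁ < x₂) (hx2 : x₂ ≤ 1) (hε0 : 0 < ε)
    (H1 : ∀ z, z ∈ Sset α x₁ x₂ → 1 - ε ≤ z → False)
    {s e : ℝ} (hs : s ∈ Sset α x₁ x₂) (hse : s + e ∈ Sset α x₁ x₂)
    (he0 : 0 < e) (heε : e ≤ ε) (heH : e ≤ x₂ - x₁) :
    ∀ n, (Mmap α x₁ x₂)^[n] (s + e) = (Mmap α x₁ x₂)^[n] s + e := by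
  have hok : ∀ n, okR α x₁ x₂ s e n := by
    by_contra hall
    obtain ⟨N, hpre, hNf⟩ := least_not hall
    rw [okR, not_and_or] at hNf
    have hIN := iter_Ico (α := α) hx hx2 (S_Ico hs) N
    rcases hNf with hf | hf
    · push_neg at hf
      obtain ⟨hfU, hfx⟩ := hf
      have hlt : ∀ m, m ≤ N → (Mmap α x₁ x₂)^[m] s + e < 1 := by
        intro m hm
        rcases eq_or_lt_of_le hm with heq | hmN
        · subst heq; linarith
        · exact okR_lt_one hx hx2 hs m (hpre m hmN)
      have hval := rtrack_formula hx hx2 hs he0 N hlt (fun m hm => (hpre m hm).1)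
      exact S_notH hse N (by rw [hval]; exact ⟨hfx, by linarith⟩)
    · push_neg at hf
      obtain ⟨hfV, hf1⟩ := hf
      exact H1 _ (S_orbit hx hx2 hs N) (by linarith)
  intro n
  exact rtrack_formula hx hx2 hs he0 n (fun m _ => okR_lt_one hx hx2 hs m (hok m))
    (fun m _ => (hok m).1)

lemma march (hx0 : 0 ≤ x₁) (hx : x₁ < x₂) (hx2 : x₂ ≤ 1) (hε0 : 0 < ε)
    (H1 : ∀ z, z ∈ Sset α x₁ x₂ → 1 - ε ≤ z → False)
    {a g : ℝ} {Δ : ℕ} (ha : a ∈ Sset α x₁ x₂) (hΔ : 0 < Δ)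
    (hab : (Mmap α x₁ x₂)^[Δ] a = a + g) (hg0 : g ≠ 0)
    (hg1 : |g| ≤ ε) (hg2 : |g| ≤ x₂ - x₁) : False := by
  have horb : ∀ k : ℕ, (Mmap α x₁ x₂)^[k * Δ] a ∈ Sset α x₁ x₂ := fun k =>
    S_orbit hx hx2 ha (k * Δ)
  have hidx : ∀ k : ℕ, (k+1) * Δ = Δ + k * Δ := fun k => by ring
  rcases lt_or_gt_of_ne hg0 with hneg | hpos
  · -- g < 0 : descend
    have Q : ∀ k : ℕ, (Mmap α x₁ x₂)^[(k+1) * Δ] a = (Mmap α x₁ x₂)^[k * Δ] a + g := by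
      intro k
      induction k with
      | zero => simpa using hab
      | succ k ih =>
        have hs' : (Mmap α x₁ x₂)^[(k+1) * Δ] a ∈ Sset α x₁ x₂ := horb (k+1)
        have hse : (Mmap α x₁ x₂)^[(k+1) * Δ] a + -g ∈ Sset α x₁ x₂ := by
          have : (Mmap α x₁ x₂)^[(k+1) * Δ] a + -g = (Mmap α x₁ x₂)^[k * Δ] a := by
            rw [ih]; ring
          rw [this]; exact horb k
        have hp := tpair hx0 hx hx2 hε0 H1 hs' hse (by linarith)
          (by have := neg_le_of_abs_le hg1; linarith)
          (by have := neg_le_of_abs_le hg2; linarith) Δ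
        have harg : (Mmap α x₁ x₂)^[(k+1) * Δ] a + -g = (Mmap α x₁ x₂)^[k * Δ] a := by
          rw [ih]; ring
        rw [harg] at hp
        -- hp : M^[Δ] (M^[kΔ] a) = M^[Δ] (M^[(k+1)Δ] a) + -g
        have e1 : (Mmap α x₁ x₂)^[Δ] ((Mmap α x₁ x₂)^[k * Δ] a)
            = (Mmap α x₁ x₂)^[(k+1) * Δ] a := by
          rw [hidx k, Function.iterate_add_apply]
        have e2 : (Mmap α x₁ x₂)^[Δ] ((Mmap α x₁ x₂)^[(k+1) * Δ] a)
            = (Mmap α x₁ x₂)^[(k+2) * Δ] a := by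
          rw [show (k+2) * Δ = Δ + (k+1) * Δ by ring, Function.iterate_add_apply]
        rw [e1, e2] at hp
        -- hp : M^[(k+1)Δ] a = M^[(k+2)Δ] a + -g
        have : (Mmap α x₁ x₂)^[(k+1+1) * Δ] a = (Mmap α x₁ x₂)^[(k+1) * Δ] a + g := by
          rw [show k+1+1 = k+2 from rfl]; linarith
        exact this
    have R : ∀ k : ℕ, (Mmap α x₁ x₂)^[k * Δ] a = a + k * g := by
      intro k
      induction k with
      | zero => simp
      | succ k ih => rw [Q k, ih]; push_cast; ring
    obtain ⟨m, hm⟩ := exists_nat_gt (a / (-g))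
    have hm2 : a < (m : ℝ) * (-g) := by
      have := (div_lt_iff₀ (by linarith : (0:ℝ) < -g)).mp hm
      linarith
    have := (S_Ico (horb m)).1
    rw [R m] at this
    nlinarith
  · -- g > 0 : ascend
    have Q : ∀ k : ℕ, (Mmap α x₁ x₂)^[(k+1) * Δ] a = (Mmap α x₁ x₂)^[k * Δ] a + g := by
      intro k
      induction k with
      | zero => simpa using hab
      | succ k ih =>
        have hs' : (Mmap α x₁ x₂)^[k * Δ] a ∈ Sset α x₁ x₂ := horb k
        have hse : (Mmap α x₁ x₂)^[k * Δ] a + g ∈ Sset α x₁ x₂ := by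
          rw [← ih]; exact horb (k+1)
        have hp := tpair hx0 hx hx2 hε0 H1 hs' hse hpos
          (le_trans (le_abs_self g) hg1) (le_trans (le_abs_self g) hg2) Δ
        rw [← ih] at hp
        have e1 : (Mmap α x₁ x₂)^[Δ] ((Mmap α x₁ x₂)^[(k+1) * Δ] a)
            = (Mmap α x₁ x₂)^[(k+2) * Δ] a := by
          rw [show (k+2) * Δ = Δ + (k+1) * Δ by ring, Function.iterate_add_apply]
        have e2 : (Mmap α x₁ x₂)^[Δ] ((Mmap α x₁ x₂)^[k * Δ] a)
            = (Mmap α x₁ x₂)^[(k+1) * Δ] a := by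
          rw [hidx k, Function.iterate_add_apply]
        rw [e1, e2] at hp
        exact hp
    have R : ∀ k : ℕ, (Mmap α x₁ x₂)^[k * Δ] a = a + k * g := by
      intro k
      induction k with
      | zero => simp
      | succ k ih => rw [Q k, ih]; push_cast; ring
    obtain ⟨m, hm⟩ := exists_nat_gt ((1 - a) / g)
    have hm2 : 1 - a < (m : ℝ) * g := by
      have := (div_lt_iff₀ hpos).mp hm
      linarith
    have := (S_Ico (horb m)).2
    rw [R m] at this
    linarith

end PartIII

lemma partiii (hx0 : 0 ≤ x₁) (hx : x₁ < x₂) (hx2 : x₂ ≤ 1)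
    (hS : (Sset α x₁ x₂).Nonempty) {ε : ℝ} (hε0 : 0 < ε) (hε1 : ε < 1) :
    (Sset α x₁ x₂ ∩ Set.Ico 0 ε).Nonempty ∨
      (Sset α x₁ x₂ ∩ Set.Ico (1 - ε) 1).Nonempty := by
  classical
  by_contra hcon
  push_neg at hcon
  obtain ⟨hA, hB⟩ := hcon
  have H0 : ∀ z, z ∈ Sset α x₁ x₂ → z < ε → False := by
    intro z hz h
    exact Set.eq_empty_iff_forall_notMem.mp hA z ⟨hz, (S_Ico hz).1, h⟩
  have H1 : ∀ z, z ∈ Sset α x₁ x₂ → 1 - ε ≤ z → False := by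
    intro z hz h
    exact Set.eq_empty_iff_forall_notMem.mp hB z ⟨hz, h, (S_Ico hz).2⟩
  by_cases hx21 : x₂ < 1
  case neg =>
    have hx2e : x₂ = 1 := le_antisymm hx2 (le_of_not_gt hx21)
    rcases parti hx0 hx hx2 hS hε0 with ⟨z, hz, _, hz2⟩ | ⟨z, hz, y, ⟨hy1, hy2⟩, hyf⟩
    · exact H0 z hz hz2
    · have hfr : Int.fract y = y - 1 := by
        refine fract_eq_of (by rw [hx2e] at hy1; linarith) (by rw [hx2e] at hy2; linarith) ⟨1, ?_⟩
        push_cast; ring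
      exact H0 z hz (by rw [← hyf, hfr]; rw [hx2e] at hy2; linarith)
  case pos =>
  by_cases hx1 : 0 < x₁
  case neg =>
    have hx10 : x₁ = 0 := le_antisymm (le_of_not_gt hx1) hx0
    rcases partii hx0 hx hx2 hS hε0 with ⟨z, hz, hz1, _⟩ | ⟨z, hz, y, ⟨hy1, hy2⟩, hyf⟩
    · exact H1 z hz hz1
    · have hfr : Int.fract y = y + 1 := by
        refine fract_eq_of (by rw [hx10] at hy1; linarith) (by rw [hx10] at hy2; linarith) ⟨-1, ?_⟩
        push_cast; ring
      exact H1 z hz (by rw [← hyf, hfr]; rw [hx10] at hy1; linarith)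
  case pos =>
  -- main case
  set ζ := min (min ε (x₂ - x₁)) (min x₁ (1 - x₂)) / 2 with hζdef
  have hζ0 : 0 < ζ := by
    apply div_pos _ (by norm_num)
    exact lt_min (lt_min hε0 (by linarith)) (lt_min hx1 (by linarith))
  have hmε : min (min ε (x₂ - x₁)) (min x₁ (1 - x₂)) ≤ ε :=
    le_trans (min_le_left _ _) (min_le_left _ _)
  have hmH : min (min ε (x₂ - x₁)) (min x₁ (1 - x₂)) ≤ x₂ - x₁ :=
    le_trans (min_le_left _ _) (min_le_right _ _)
  have hmx2 : min (min ε (x₂ - x₁)) (min x₁ (1 - x₂)) ≤ 1 - x₂ :=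
    le_trans (min_le_right _ _) (min_le_right _ _)
  have hζε : 2 * ζ ≤ ε := by rw [hζdef]; linarith
  have hζH : 2 * ζ ≤ x₂ - x₁ := by rw [hζdef]; linarith
  have hζx2 : 2 * ζ ≤ 1 - x₂ := by rw [hζdef]; linarith
  have hS' := hS
  obtain ⟨s₀, hs₀⟩ := hS'
  -- pigeonhole : the orbit of s₀ is eventually periodic (otherwise `march` applies)
  have key2 : ∀ p q : ℕ, Nat.floor ((Mmap α x₁ x₂)^[p] s₀ / ζ) =
      Nat.floor ((Mmap α x₁ x₂)^[q] s₀ / ζ) →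
      (Mmap α x₁ x₂)^[p] s₀ - (Mmap α x₁ x₂)^[q] s₀ < ζ := by
    intro p q h
    have hIp := iter_Ico (α := α) hx hx2 (S_Ico hs₀) p
    have hIq := iter_Ico (α := α) hx hx2 (S_Ico hs₀) q
    have b1 : (Nat.floor ((Mmap α x₁ x₂)^[q] s₀ / ζ) : ℝ) ≤ (Mmap α x₁ x₂)^[q] s₀ / ζ :=
      Nat.floor_le (div_nonneg hIq.1 hζ0.le)
    have b2 : (Mmap α x₁ x₂)^[p] s₀ / ζ <
        (Nat.floor ((Mmap α x₁ x₂)^[p] s₀ / ζ) : ℝ) + 1 := Nat.lt_floor_add_one _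
    rw [h] at b2
    have b3 : (Mmap α x₁ x₂)^[p] s₀ / ζ - (Mmap α x₁ x₂)^[q] s₀ / ζ < 1 := by linarith
    have b4 : ((Mmap α x₁ x₂)^[p] s₀ / ζ - (Mmap α x₁ x₂)^[q] s₀ / ζ) * ζ < 1 * ζ :=
      mul_lt_mul_of_pos_right b3 hζ0
    have b5 : ((Mmap α x₁ x₂)^[p] s₀ / ζ - (Mmap α x₁ x₂)^[q] s₀ / ζ) * ζ
        = (Mmap α x₁ x₂)^[p] s₀ - (Mmap α x₁ x₂)^[q] s₀ := by
      field_simp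
    linarith [b5 ▸ b4]
  have main2 : ∀ p q : ℕ, p < q →
      Nat.floor ((Mmap α x₁ x₂)^[p] s₀ / ζ) = Nat.floor ((Mmap α x₁ x₂)^[q] s₀ / ζ) →
      ∃ k Δ : ℕ, 0 < Δ ∧ (Mmap α x₁ x₂)^[k + Δ] s₀ = (Mmap α x₁ x₂)^[k] s₀ := by
    intro p q hpq heq
    set g := (Mmap α x₁ x₂)^[q] s₀ - (Mmap α x₁ x₂)^[p] s₀ with hgdef
    have habs : |g| < ζ := by
      rw [abs_lt]
      constructor
      · have := key2 p q heq; rw [hgdef]; linarith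
      · have := key2 q p heq.symm; rw [hgdef]; linarith
    by_cases hg : g = 0
    · refine ⟨p, q - p, by omega, ?_⟩
      have he : p + (q - p) = q := by omega
      rw [he]
      have : (Mmap α x₁ x₂)^[q] s₀ = (Mmap α x₁ x₂)^[p] s₀ := by
        have := hgdef ▸ hg; linarith
      exact this
    · exfalso
      refine march hx0 hx hx2 hε0 H1 (S_orbit hx hx2 hs₀ p) (show 0 < q - p by omega)
        ?_ hg (by linarith) (by linarith)
      rw [← Function.iterate_add_apply]
      have he : q - p + p = q := by omega
      rw [he, hgdef]
      ring
  have hper : ∃ k Δ : ℕ, 0 < Δ ∧ (Mmap α x₁ x₂)^[k + Δ] s₀ = (Mmap α x₁ x₂)^[k] s₀ := by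
    set B := Nat.floor (1/ζ) + 1 with hBdef
    have hmaps : ∀ n ∈ Finset.range (B+1),
        Nat.floor ((Mmap α x₁ x₂)^[n] s₀ / ζ) ∈ Finset.range B := by
      intro n _
      have hI := iter_Ico (α := α) hx hx2 (S_Ico hs₀) n
      have h1 : (Mmap α x₁ x₂)^[n] s₀ / ζ ≤ 1/ζ := by
        gcongr
        exact hI.2.le
      rw [Finset.mem_range, hBdef]
      have h2 := Nat.floor_le_floor h1
      omega
    have hcard : (Finset.range B).card < (Finset.range (B+1)).card := by simp
    obtain ⟨i, hi, j, hj, hij, hfij⟩ :=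
      Finset.exists_ne_map_eq_of_card_lt_of_maps_to hcard hmaps
    rcases lt_or_gt_of_ne hij with h | h
    · exact main2 i j h hfij
    · exact main2 j i h hfij.symm
  obtain ⟨i0, Δ, hΔ0, hper0⟩ := hper
  set a := (Mmap α x₁ x₂)^[i0] s₀ with hadef
  have ha : a ∈ Sset α x₁ x₂ := S_orbit hx hx2 hs₀ i0
  have haΔ : (Mmap α x₁ x₂)^[Δ] a = a := by
    rw [hadef, ← Function.iterate_add_apply, Nat.add_comm Δ i0]
    exact hper0
  have hcyc : ∀ n, (Mmap α x₁ x₂)^[n] a = (Mmap α x₁ x₂)^[n % Δ] a := by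
    intro n
    conv_lhs => rw [← Nat.mod_add_div n Δ]
    rw [Function.iterate_add_apply]
    congr 1
    rw [Function.iterate_mul]
    exact Function.iterate_fixed haΔ (n / Δ)
  by_cases hUex : ∃ k, (Mmap α x₁ x₂)^[k] a < x₁
  case neg =>
    push_neg at hUex
    have hVall : ∀ n, x₂ ≤ (Mmap α x₁ x₂)^[n] a := by
      intro n
      rcases orbit_cases hx hx2 ha n with hU | hV
      · exact absurd hU (not_lt.mpr (hUex n))
      · exact hV
    have hclaim : ∀ k : ℕ, (a + k * ζ ∈ Sset α x₁ x₂ ∧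
        ∀ n, (Mmap α x₁ x₂)^[n] (a + k * ζ) = (Mmap α x₁ x₂)^[n] a + k * ζ) := by
      intro k
      induction k with
      | zero =>
        constructor
        · have h : a + ((0:ℕ):ℝ) * ζ = a := by push_cast; ring
          rw [h]; exact ha
        · intro n
          have h : a + ((0:ℕ):ℝ) * ζ = a := by push_cast; ring
          rw [h]; push_cast; ring
      | succ k ih =>
        obtain ⟨hsk, hpark⟩ := ih
        have hok : ∀ n, okR α x₁ x₂ (a + k * ζ) ζ n := by
          intro n
          constructor
          · intro hU
            exfalso
            rw [hpark n] at hU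
            have h1 := hVall n
            have hk0 : (0:ℝ) ≤ (k:ℝ) * ζ := by positivity
            linarith
          · intro _
            by_contra hcon
            push_neg at hcon
            exact H1 _ (S_orbit hx hx2 hsk n) (by linarith)
        constructor
        · have h := rtrack_S hx hx2 hsk hζ0 hok
          have harg : a + (k:ℝ) * ζ + ζ = a + (((k:ℕ)+1:ℕ):ℝ) * ζ := by push_cast; ring
          rwa [harg] at h
        · intro n
          have hform := rtrack_formula hx hx2 hsk hζ0 n
            (fun m _ => okR_lt_one hx hx2 hsk m (hok m)) (fun m _ => (hok m).1)
          have harg : a + (((k:ℕ)+1:ℕ):ℝ) * ζ = a + (k:ℝ) * ζ + ζ := by push_cast; ring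
          rw [harg, hform, hpark n]
          push_cast; ring
    obtain ⟨m, hm⟩ := exists_nat_gt ((1 - a) / ζ)
    have hm2 : 1 - a < (m : ℝ) * ζ := by
      have := (div_lt_iff₀ hζ0).mp hm
      linarith
    have := (S_Ico (hclaim m).1).2
    linarith
  case pos =>
  obtain ⟨kw, hkw⟩ := hUex
  set F := (Finset.range Δ).filter (fun k => (Mmap α x₁ x₂)^[k] a < x₁) with hFdef
  have hFne : F.Nonempty := by
    refine ⟨kw % Δ, ?_⟩
    rw [hFdef, Finset.mem_filter, Finset.mem_range]
    exact ⟨Nat.mod_lt _ hΔ0, by rw [← hcyc]; exact hkw⟩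
  set G := F.image (fun k => (Mmap α x₁ x₂)^[k] a) with hGdef
  have hGne : G.Nonempty := hFne.image _
  obtain ⟨k₀, hk₀F, hk₀v⟩ := Finset.mem_image.mp (G.max'_mem hGne)
  set Vs := G.max' hGne with hVsdef
  have hVsU : Vs < x₁ := by
    rw [← hk₀v]
    exact (Finset.mem_filter.mp hk₀F).2
  have hVsS : Vs ∈ Sset α x₁ x₂ := by
    rw [← hk₀v]; exact S_orbit hx hx2 ha k₀
  set d₁ := x₁ - Vs with hd₁def
  have hd₁ : 0 < d₁ := by rw [hd₁def]; linarith
  have hUb : ∀ n, (Mmap α x₁ x₂)^[n] a < x₁ → (Mmap α x₁ x₂)^[n] a ≤ Vs := by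
    intro n h
    rw [hcyc n] at h ⊢
    refine Finset.le_max' G _ ?_
    rw [hGdef]
    exact Finset.mem_image_of_mem _
      (Finset.mem_filter.mpr ⟨Finset.mem_range.mpr (Nat.mod_lt _ hΔ0), h⟩)
  have hVsOrb : ∀ n, (Mmap α x₁ x₂)^[n] Vs = (Mmap α x₁ x₂)^[n + k₀] a := by
    intro n
    rw [← hk₀v, ← Function.iterate_add_apply]
  have hUbV : ∀ n, (Mmap α x₁ x₂)^[n] Vs < x₁ → (Mmap α x₁ x₂)^[n] Vs ≤ Vs := by
    intro n h
    rw [hVsOrb n] at h ⊢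
    exact hUb _ h
  have hVsper : (Mmap α x₁ x₂)^[Δ] Vs = Vs := by
    rw [hVsOrb Δ, Nat.add_comm Δ k₀, Function.iterate_add_apply, haΔ, hk₀v]
  set eh := min ζ d₁ / 2 with hehdef
  have heh0 : 0 < eh := div_pos (lt_min hζ0 hd₁) (by norm_num)
  have hehζ : 2 * eh ≤ ζ := by rw [hehdef]; linarith [min_le_left ζ d₁]
  have hehd : 2 * eh ≤ d₁ := by rw [hehdef]; linarith [min_le_right ζ d₁]
  have hclimb : ∀ k : ℕ, ∀ o : ℝ, 0 ≤ o → o < d₁ → o ≤ k * eh →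
      (Vs + o ∈ Sset α x₁ x₂ ∧
        ∀ n, (Mmap α x₁ x₂)^[n] (Vs + o) = (Mmap α x₁ x₂)^[n] Vs + o) := by
    intro k
    induction k with
    | zero =>
      intro o h0 _ hk
      have ho : o = 0 := le_antisymm (by simpa using hk) h0
      subst ho
      constructor
      · rw [add_zero]; exact hVsS
      · intro n; rw [add_zero, add_zero]
    | succ k ih =>
      intro o h0 hd hk
      by_cases hok' : o ≤ k * eh
      · exact ih o h0 hd hok'
      · push_neg at hok'
        have hkeh : (0:ℝ) ≤ k * eh := by positivity
        set o' := max (o - eh) 0 with ho'def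
        have ho'0 : 0 ≤ o' := le_max_right _ _
        have ho'k : o' ≤ k * eh := by
          apply max_le _ hkeh
          push_cast at hk
          linarith
        have ho'lt : o' < o := by
          apply max_lt (by linarith) (by linarith)
        have ho'd : o' < d₁ := lt_trans ho'lt hd
        obtain ⟨hS1, hpar1⟩ := ih o' ho'0 ho'd ho'k
        set e' := o - o' with he'def
        have he'0 : 0 < e' := by rw [he'def]; linarith
        have he'eh : e' ≤ eh := by
          rw [he'def, ho'def]
          have := le_max_left (o - eh) 0
          linarith
        have hok2 : ∀ n, okR α x₁ x₂ (Vs + o') e' n := by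
          intro n
          constructor
          · intro hU
            rw [hpar1 n] at hU ⊢
            have hUv : (Mmap α x₁ x₂)^[n] Vs < x₁ := by linarith
            have hle := hUbV n hUv
            have hD : d₁ = x₁ - Vs := hd₁def
            rw [he'def]
            linarith
          · intro _
            by_contra hcon
            push_neg at hcon
            exact H1 _ (S_orbit hx hx2 hS1 n) (by linarith)
        refine ⟨?_, ?_⟩
        · have h := rtrack_S hx hx2 hS1 he'0 hok2
          have harg : Vs + o' + e' = Vs + o := by rw [he'def]; ring
          rwa [harg] at h
        · intro n
          have hform := rtrack_formula hx hx2 hS1 he'0 n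
            (fun m _ => okR_lt_one hx hx2 hS1 m (hok2 m)) (fun m _ => (hok2 m).1)
          have harg : Vs + o = Vs + o' + e' := by rw [he'def]; ring
          rw [harg, hform, hpar1 n]
          ring
  have hclimbAll : ∀ o : ℝ, 0 ≤ o → o < d₁ →
      (Vs + o ∈ Sset α x₁ x₂ ∧
        ∀ n, (Mmap α x₁ x₂)^[n] (Vs + o) = (Mmap α x₁ x₂)^[n] Vs + o) := by
    intro o h0 hd
    obtain ⟨k, hk⟩ := exists_nat_gt (o / eh)
    refine hclimb k o h0 hd ?_
    have := (div_lt_iff₀ heh0).mp hk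
    linarith
  -- final kill
  rcases parti hx0 hx hx2 hS hζ0 with ⟨z, hz, _, hz2⟩ | ⟨z, hz, y, ⟨hy1, hy2⟩, hyf⟩
  · exact H0 z hz (by linarith)
  · have hy3 : y < 1 := by linarith
    have hzy : z = y := by rw [← hyf]; exact fract_self_of (by linarith) hy3
    set c := z - x₂ with hcdef
    have hc0 : 0 ≤ c := by rw [hcdef, hzy]; linarith
    have hcζ : c < ζ := by rw [hcdef, hzy]; linarith
    set c' := min d₁ (ζ - c) / 2 with hc'def
    have hc'0 : 0 < c' := div_pos (lt_min hd₁ (by linarith)) (by norm_num)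
    have hc'd : 2 * c' ≤ d₁ := by rw [hc'def]; linarith [min_le_left d₁ (ζ - c)]
    have hc'ζ : 2 * c' ≤ ζ - c := by rw [hc'def]; linarith [min_le_right d₁ (ζ - c)]
    set g := c + c' with hgdef
    have hg0 : 0 < g := by rw [hgdef]; linarith
    have hgζ : g < ζ := by rw [hgdef]; linarith
    obtain ⟨hqS, hqpar⟩ := hclimbAll (d₁ - c') (by linarith) (by linarith)
    set q := Vs + (d₁ - c') with hqdef
    have hqx : q = x₁ - c' := by rw [hqdef, hd₁def]; ring
    have hqper : (Mmap α x₁ x₂)^[Δ] q = q := by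
      rw [hqpar Δ, hVsper, hqdef]
    have hqU : q < x₁ := by rw [hqx]; linarith
    have hMqS : Mmap α x₁ x₂ q ∈ Sset α x₁ x₂ := by
      have := S_orbit hx hx2 hqS 1
      simpa using this
    have hzV : x₂ ≤ z := by rw [hzy]; exact hy1
    have step1 : Mmap α x₁ x₂ z = Mmap α x₁ x₂ q + g := by
      rw [M_V hx hzV, M_U hqU]
      have e1 : Int.fract (z + α) = Int.fract ((q + α + x₂ - x₁) + g) := by
        congr 1
        rw [hqx, hgdef, hcdef]
        ring
      rw [e1, ← frac_add_frac (q + α + x₂ - x₁) g]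
      apply fract_self_of
      · have := Int.fract_nonneg (q + α + x₂ - x₁); linarith
      · by_contra hge
        push_neg at hge
        refine H1 (Int.fract (q + α + x₂ - x₁)) ?_ (by linarith)
        rw [← M_U hqU]
        exact hMqS
    have hnotall : ¬ ∀ n, okR α x₁ x₂ (Mmap α x₁ x₂ q) g n := by
      intro hall
      have hO : (Mmap α x₁ x₂)^[Δ - 1] (Mmap α x₁ x₂ q) = q := by
        have h1 : (Mmap α x₁ x₂)^[Δ - 1 + 1] q = q := by
          have he : Δ - 1 + 1 = Δ := by omega
          rw [he]; exact hqper
        rw [Function.iterate_succ_apply] at h1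
        exact h1
      have h2 := (hall (Δ - 1)).1
      rw [hO] at h2
      have h3 := h2 hqU
      rw [hqx, hgdef] at h3
      linarith
    obtain ⟨N, hpre, hNf⟩ := least_not hnotall
    rw [okR, not_and_or] at hNf
    have hIN := iter_Ico (α := α) hx hx2 (S_Ico hMqS) N
    rcases hNf with hf | hf
    · push_neg at hf
      obtain ⟨hfU, hfx⟩ := hf
      have hlt : ∀ m, m ≤ N → (Mmap α x₁ x₂)^[m] (Mmap α x₁ x₂ q) + g < 1 := by
        intro m hm
        rcases eq_or_lt_of_le hm with heq | hmN
        · subst heq; linarith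
        · exact okR_lt_one hx hx2 hMqS m (hpre m hmN)
      have hval := rtrack_formula hx hx2 hMqS hg0 N hlt (fun m hm => (hpre m hm).1)
      rw [← step1] at hval
      have hH := S_notH hz (N + 1)
      rw [Function.iterate_succ_apply] at hH
      exact hH (by rw [hval]; exact ⟨hfx, by linarith⟩)
    · push_neg at hf
      exact H1 _ (S_orbit hx hx2 hMqS N) (by linarith [hf.2])

end MIS


/-- If `𝓢 ≠ ∅`, then for every `0 < ε < 1`, `𝓢` meets certain small arcs near
`0`, `1`, `x₁` and `x₂`. -/
theorem maximalInvariantSet_accumulation (α x₁ x₂ : ℝ) (hα0 : 0 ≤ α) (hα1 : α < 1)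
    (hx0 : 0 ≤ x₁) (hx : x₁ < x₂) (hx2 : x₂ ≤ 1)
    (hS : (Sset α x₁ x₂).Nonempty) (ε : ℝ) (hε0 : 0 < ε) (hε1 : ε < 1) :
    ((Sset α x₁ x₂ ∩ Set.Ico 0 ε).Nonempty ∨
      (Sset α x₁ x₂ ∩ Int.fract '' Set.Ico x₂ (x₂ + ε)).Nonempty) ∧
    ((Sset α x₁ x₂ ∩ Set.Ico (1 - ε) 1).Nonempty ∨
      (Sset α x₁ x₂ ∩ Int.fract '' Set.Ico (x₁ - ε) x₁).Nonempty) ∧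
    ((Sset α x₁ x₂ ∩ Set.Ico 0 ε).Nonempty ∨
      (Sset α x₁ x₂ ∩ Set.Ico (1 - ε) 1).Nonempty) ∧
    ((Sset α x₁ x₂ ∩ Int.fract '' Set.Ico (x₁ - ε) x₁).Nonempty ∨
      (Sset α x₁ x₂ ∩ Int.fract '' Set.Ico x₂ (x₂ + ε)).Nonempty) := by
  refine ⟨?_, ?_, ?_, ?_⟩
  · exact MIS.parti hx0 hx hx2 hS hε0
  · exact MIS.partii hx0 hx hx2 hS hε0
  · exact MIS.partiii hx0 hx hx2 hS hε0 hε1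
  · exact MIS.partiv hx0 hx hx2 hS hε0 hε1
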